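/- Let N ≥ 1 be a natural number. For a function h : (Fin (N+1) → ℂ) → ℂ that is differentiable over ℝ, define the Wirtinger derivatives ∂_j h(z) := (1/2)·(fderiv ℝ h z (e j) − Complex.I · fderiv ℝ h z (Complex.I • e j)) and ∂̄_j h(z) := (1/2)·(fderiv ℝ h z (e j) + Complex.I · fderiv ℝ h z (Complex.I • e j)), where e j is the j-th standard basis vector; define Wirtinger derivatives on (Fin N → ℂ) analogously. Let u : (Fin N → ℂ) → ℂ be twice continuously differentiable over ℝ, and define r : (Fin (N+1) → ℂ) → ℂ by r(z) := z 0 · conj (z 0) · u(z ∘ Fin.succ). Then for every z ∈ Fin (N+1) → ℂ, writing z' := z ∘ Fin.succ, the (N+1) × (N+1) complex Hessian matrix M with entries M j k := ∂_j (∂̄_k r)(z) satisfies det M = (z 0 · conj (z 0))^N · det B, where B is the (N+1) × (N+1) bordered Hessian of u at z': B 0 0 = u(z'), B 0 k = ∂̄_k u(z') for 1 ≤ k ≤ N, B j 0 = ∂_j u(z') for 1 ≤ j ≤ N, and B j k = ∂_j(∂̄_k u)(z') for 1 ≤ j, k ≤ N. -/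

import Mathlib

open Complex

/-- Wirtinger derivative `∂_j h (z) = ½ (∂h/∂x_j − i ∂h/∂y_j)` of a function
`h : (Fin n → ℂ) → ℂ`, expressed via real Fréchet derivatives in the directions
`e_j` and `i • e_j`. -/
noncomputable def wirtingerD {n : ℕ} (h : (Fin n → ℂ) → ℂ) (j : Fin n)
    (z : Fin n → ℂ) : ℂ :=
  (1 / 2) * (fderiv ℝ h z (Pi.single j 1) -
    Complex.I * fderiv ℝ h z (Complex.I • (Pi.single j 1 : Fin n → ℂ)))

/-- Conjugate Wirtinger derivative `∂̄_j h (z) = ½ (∂h/∂x_j + i ∂h/∂y_j)`. -/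
noncomputable def wirtingerDBar {n : ℕ} (h : (Fin n → ℂ) → ℂ) (j : Fin n)
    (z : Fin n → ℂ) : ℂ :=
  (1 / 2) * (fderiv ℝ h z (Pi.single j 1) +
    Complex.I * fderiv ℝ h z (Complex.I • (Pi.single j 1 : Fin n → ℂ)))

namespace AmbientAux
variable {N : ℕ}
noncomputable def tl (N : ℕ) : (Fin (N+1) → ℂ) →L[ℝ] (Fin N → ℂ) :=
  ContinuousLinearMap.pi fun i => ContinuousLinearMap.proj i.succ
noncomputable def hd (N : ℕ) : (Fin (N+1) → ℂ) →L[ℝ] ℂ :=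
  ContinuousLinearMap.proj 0
noncomputable def cj : ℂ →L[ℝ] ℂ := Complex.conjCLE.toContinuousLinearMap
@[simp] lemma tl_apply (w : Fin (N+1) → ℂ) (i : Fin N) : tl N w i = w i.succ := rfl
@[simp] lemma hd_apply (w : Fin (N+1) → ℂ) : hd N w = w 0 := rfl
@[simp] lemma cj_apply (a : ℂ) : cj a = (starRingEnd ℂ) a := rfl
@[simp] lemma tl_single_zero : tl N (Pi.single 0 1) = 0 := by
  funext i; simp [tl, Pi.single_apply, Fin.succ_ne_zero]
@[simp] lemma tl_single_succ (j : Fin N) : tl N (Pi.single j.succ 1) = Pi.single j 1 := by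
  funext i; simp [tl, Pi.single_apply, Fin.succ_inj]
@[simp] lemma tl_smul (c : ℂ) (w : Fin (N+1) → ℂ) : tl N (c • w) = c • tl N w := rfl
@[simp] lemma hd_single_zero : hd N (Pi.single 0 1) = 1 := by simp [hd]
@[simp] lemma hd_single_succ (j : Fin N) : hd N (Pi.single j.succ 1) = 0 := by
  simp [hd, Pi.single_apply, (Fin.succ_ne_zero j).symm]
@[simp] lemma hd_smul (c : ℂ) (w : Fin (N+1) → ℂ) : hd N (c • w) = c * w 0 := rfl
@[simp] lemma single_succ_zero (j : Fin N) : (Pi.single j.succ 1 : Fin (N+1) → ℂ) 0 = 0 := by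
  simp [Pi.single_apply, (Fin.succ_ne_zero j).symm]

lemma hasFDerivAt_mulfun {f : (Fin N → ℂ) → ℂ} {w : Fin (N+1) → ℂ}
    (hf : DifferentiableAt ℝ f (w ∘ Fin.succ)) :
    HasFDerivAt (fun w : Fin (N+1) → ℂ => w 0 * (starRingEnd ℂ) (w 0) * f (w ∘ Fin.succ))
      ((w 0 * (starRingEnd ℂ) (w 0)) • ((fderiv ℝ f (w ∘ Fin.succ)).comp (tl N)) +
        (f (w ∘ Fin.succ)) • ((w 0) • (cj.comp (hd N)) + ((starRingEnd ℂ) (w 0)) • (hd N))) w := by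
  have h1 : HasFDerivAt (fun w : Fin (N+1) → ℂ => w 0) (hd N) w := (hd N).hasFDerivAt
  have h2 : HasFDerivAt (fun w : Fin (N+1) → ℂ => (starRingEnd ℂ) (w 0)) (cj.comp (hd N)) w :=
    cj.hasFDerivAt.comp w h1
  have h3 : HasFDerivAt (fun w : Fin (N+1) → ℂ => f (w ∘ Fin.succ))
      ((fderiv ℝ f (w ∘ Fin.succ)).comp (tl N)) w :=
    (hf.hasFDerivAt).comp w (tl N).hasFDerivAt
  exact (h1.mul h2).mul h3
lemma hasFDerivAt_zfun {f : (Fin N → ℂ) → ℂ} {w : Fin (N+1) → ℂ}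
    (hf : DifferentiableAt ℝ f (w ∘ Fin.succ)) :
    HasFDerivAt (fun w : Fin (N+1) → ℂ => w 0 * f (w ∘ Fin.succ))
      ((w 0) • ((fderiv ℝ f (w ∘ Fin.succ)).comp (tl N)) + (f (w ∘ Fin.succ)) • (hd N)) w := by
  have h1 : HasFDerivAt (fun w : Fin (N+1) → ℂ => w 0) (hd N) w := (hd N).hasFDerivAt
  have h3 : HasFDerivAt (fun w : Fin (N+1) → ℂ => f (w ∘ Fin.succ))
      ((fderiv ℝ f (w ∘ Fin.succ)).comp (tl N)) w :=
    (hf.hasFDerivAt).comp w (tl N).hasFDerivAt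
  exact h1.mul h3

-- entry lemmas
lemma entryA {f : (Fin N → ℂ) → ℂ} {w : Fin (N+1) → ℂ}
    (hf : DifferentiableAt ℝ f (w ∘ Fin.succ)) :
    wirtingerDBar (fun v => v 0 * (starRingEnd ℂ) (v 0) * f (v ∘ Fin.succ)) 0 w
      = w 0 * f (w ∘ Fin.succ) := by
  rw [wirtingerDBar, (hasFDerivAt_mulfun hf).fderiv]
  simp only [ContinuousLinearMap.add_apply, ContinuousLinearMap.coe_smul', Pi.smul_apply,
    smul_eq_mul, ContinuousLinearMap.comp_apply, tl_single_zero, tl_smul, smul_zero, map_zero,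
    hd_single_zero, hd_smul, cj_apply, map_one, map_mul, Complex.conj_I, hd_apply,
    Pi.smul_apply, mul_one, mul_zero]
  ring_nf
  try simp [Complex.I_sq, single_succ_zero]
  try ring_nf

lemma entryB {f : (Fin N → ℂ) → ℂ} {w : Fin (N+1) → ℂ} (k : Fin N)
    (hf : DifferentiableAt ℝ f (w ∘ Fin.succ)) :
    wirtingerDBar (fun v => v 0 * (starRingEnd ℂ) (v 0) * f (v ∘ Fin.succ)) k.succ w
      = w 0 * (starRingEnd ℂ) (w 0) * wirtingerDBar f k (w ∘ Fin.succ) := by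
  rw [wirtingerDBar, (hasFDerivAt_mulfun hf).fderiv, wirtingerDBar]
  simp only [ContinuousLinearMap.add_apply, ContinuousLinearMap.coe_smul', Pi.smul_apply,
    smul_eq_mul, ContinuousLinearMap.comp_apply, tl_single_succ, tl_smul, map_zero,
    hd_single_succ, hd_smul, cj_apply, map_mul, Complex.conj_I, hd_apply, mul_zero, map_smul]
  ring_nf
  try simp [Complex.I_sq, single_succ_zero]
  try ring_nf

lemma entryC {f : (Fin N → ℂ) → ℂ} {w : Fin (N+1) → ℂ}
    (hf : DifferentiableAt ℝ f (w ∘ Fin.succ)) :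
    wirtingerD (fun v => v 0 * f (v ∘ Fin.succ)) 0 w = f (w ∘ Fin.succ) := by
  rw [wirtingerD, (hasFDerivAt_zfun hf).fderiv]
  simp only [ContinuousLinearMap.add_apply, ContinuousLinearMap.coe_smul', Pi.smul_apply,
    smul_eq_mul, ContinuousLinearMap.comp_apply, tl_single_zero, tl_smul, smul_zero, map_zero,
    hd_single_zero, hd_smul, hd_apply, mul_one, mul_zero]
  ring_nf
  try simp [Complex.I_sq, single_succ_zero]
  try ring_nf

lemma entryD {f : (Fin N → ℂ) → ℂ} {w : Fin (N+1) → ℂ} (j : Fin N)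
    (hf : DifferentiableAt ℝ f (w ∘ Fin.succ)) :
    wirtingerD (fun v => v 0 * f (v ∘ Fin.succ)) j.succ w
      = w 0 * wirtingerD f j (w ∘ Fin.succ) := by
  rw [wirtingerD, (hasFDerivAt_zfun hf).fderiv, wirtingerD]
  simp only [ContinuousLinearMap.add_apply, ContinuousLinearMap.coe_smul', Pi.smul_apply,
    smul_eq_mul, ContinuousLinearMap.comp_apply, tl_single_succ, tl_smul, map_zero,
    hd_single_succ, hd_smul, hd_apply, mul_zero, map_smul]
  ring_nf
  try simp [Complex.I_sq, single_succ_zero]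
  try ring_nf

lemma entryE {f : (Fin N → ℂ) → ℂ} {w : Fin (N+1) → ℂ}
    (hf : DifferentiableAt ℝ f (w ∘ Fin.succ)) :
    wirtingerD (fun v => v 0 * (starRingEnd ℂ) (v 0) * f (v ∘ Fin.succ)) 0 w
      = (starRingEnd ℂ) (w 0) * f (w ∘ Fin.succ) := by
  rw [wirtingerD, (hasFDerivAt_mulfun hf).fderiv]
  simp only [ContinuousLinearMap.add_apply, ContinuousLinearMap.coe_smul', Pi.smul_apply,
    smul_eq_mul, ContinuousLinearMap.comp_apply, tl_single_zero, tl_smul, smul_zero, map_zero,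
    hd_single_zero, hd_smul, cj_apply, map_one, map_mul, Complex.conj_I, hd_apply,
    mul_one, mul_zero]
  ring_nf
  try simp [Complex.I_sq, single_succ_zero]
  try ring_nf

lemma entryF {f : (Fin N → ℂ) → ℂ} {w : Fin (N+1) → ℂ} (j : Fin N)
    (hf : DifferentiableAt ℝ f (w ∘ Fin.succ)) :
    wirtingerD (fun v => v 0 * (starRingEnd ℂ) (v 0) * f (v ∘ Fin.succ)) j.succ w
      = w 0 * (starRingEnd ℂ) (w 0) * wirtingerD f j (w ∘ Fin.succ) := by
  rw [wirtingerD, (hasFDerivAt_mulfun hf).fderiv, wirtingerD]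
  simp only [ContinuousLinearMap.add_apply, ContinuousLinearMap.coe_smul', Pi.smul_apply,
    smul_eq_mul, ContinuousLinearMap.comp_apply, tl_single_succ, tl_smul, map_zero,
    hd_single_succ, hd_smul, cj_apply, map_mul, Complex.conj_I, hd_apply, mul_zero, map_smul]
  ring_nf
  try simp [Complex.I_sq, single_succ_zero]
  try ring_nf

end AmbientAux

open AmbientAux

/-- Determinant identity for the complex Hessian of the CR ambient Kähler potential
`r(z) = |z₀|² u(z')` (Section 3.1 of Fefferman–Hirachi): `det(∂_j ∂̄_k r) =
|z₀|^{2N} det B`, where `B` is the bordered complex Hessian `[[u, ∂̄_k u],[∂_j u,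
∂_j ∂̄_k u]]` of `u` from Fefferman's Monge–Ampère operator. -/
theorem ambient_hessian_det (N : ℕ) (hN : 1 ≤ N)
    (u : (Fin N → ℂ) → ℂ) (hu : ContDiff ℝ 2 u)
    (z : Fin (N + 1) → ℂ) :
    Matrix.det (Matrix.of fun j k : Fin (N + 1) =>
        wirtingerD (fun w => wirtingerDBar
            (fun v => v 0 * (starRingEnd ℂ) (v 0) * u (v ∘ Fin.succ)) k w) j z)
      = (z 0 * (starRingEnd ℂ) (z 0)) ^ N *
        Matrix.det (Matrix.of fun j k : Fin (N + 1) =>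
          Fin.cases (motive := fun _ => ℂ)
            (Fin.cases (motive := fun _ => ℂ)
              (u (z ∘ Fin.succ))
              (fun k' => wirtingerDBar u k' (z ∘ Fin.succ)) k)
            (fun j' => Fin.cases (motive := fun _ => ℂ)
              (wirtingerD u j' (z ∘ Fin.succ))
              (fun k' => wirtingerD (fun w => wirtingerDBar u k' w) j'
                (z ∘ Fin.succ)) k) j) := by
  classical
  have hud : Differentiable ℝ u := hu.differentiable (by norm_num)
  have hU : ContDiff ℝ 1 (fderiv ℝ u) := hu.fderiv_right (by norm_num)
  have happ : ∀ e : Fin N → ℂ, Differentiable ℝ (fun w => fderiv ℝ u w e) := fun e =>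
    (ContinuousLinearMap.apply ℝ ℂ e).differentiable.comp (hU.differentiable (by norm_num))
  have hv : ∀ k : Fin N, Differentiable ℝ (fun w => wirtingerDBar u k w) := by
    intro k
    have : Differentiable ℝ (fun w : Fin N → ℂ =>
        fderiv ℝ u w (Pi.single k 1) + Complex.I * fderiv ℝ u w (Complex.I • (Pi.single k 1 : Fin N → ℂ))) :=
      (happ _).add ((happ _).const_mul I)
    simpa [wirtingerDBar] using this.const_mul ((1:ℂ)/2)
  set Bm : Matrix (Fin (N+1)) (Fin (N+1)) ℂ := Matrix.of fun j k : Fin (N + 1) =>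
      Fin.cases (motive := fun _ => ℂ)
        (Fin.cases (motive := fun _ => ℂ)
          (u (z ∘ Fin.succ))
          (fun k' => wirtingerDBar u k' (z ∘ Fin.succ)) k)
        (fun j' => Fin.cases (motive := fun _ => ℂ)
          (wirtingerD u j' (z ∘ Fin.succ))
          (fun k' => wirtingerD (fun w => wirtingerDBar u k' w) j'
            (z ∘ Fin.succ)) k) j with hBm
  set a : Fin (N+1) → ℂ := Fin.cases 1 (fun _ => z 0) with ha
  set b : Fin (N+1) → ℂ := Fin.cases 1 (fun _ => (starRingEnd ℂ) (z 0)) with hb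
  have hM : ∀ j k : Fin (N+1),
      wirtingerD (fun w => wirtingerDBar
          (fun v => v 0 * (starRingEnd ℂ) (v 0) * u (v ∘ Fin.succ)) k w) j z
        = a j * (b k * Bm j k) := by
    intro j k
    induction k using Fin.cases with
    | zero =>
      have hfun : (fun w => wirtingerDBar
          (fun v => v 0 * (starRingEnd ℂ) (v 0) * u (v ∘ Fin.succ)) (0 : Fin (N+1)) w)
          = fun w => w 0 * u (w ∘ Fin.succ) := funext fun w => entryA (hud _)
      rw [hfun]
      induction j using Fin.cases with
      | zero => simp [ha, hb, hBm, entryC (hud _)]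
      | succ j' => simp [ha, hb, hBm, entryD j' (hud _)]
    | succ k' =>
      have hfun : (fun w => wirtingerDBar
          (fun v => v 0 * (starRingEnd ℂ) (v 0) * u (v ∘ Fin.succ)) k'.succ w)
          = fun w => w 0 * (starRingEnd ℂ) (w 0) * wirtingerDBar u k' (w ∘ Fin.succ) :=
        funext fun w => entryB k' (hud _)
      rw [hfun]
      induction j using Fin.cases with
      | zero =>
        simp [ha, hb, hBm, entryE ((hv k') _)]
        try ring
      | succ j' =>
        have : wirtingerD (fun v => v 0 * (starRingEnd ℂ) (v 0) *
            (fun w => wirtingerDBar u k' w) (v ∘ Fin.succ)) j'.succ z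
            = z 0 * (starRingEnd ℂ) (z 0) *
              wirtingerD (fun w => wirtingerDBar u k' w) j' (z ∘ Fin.succ) :=
          entryF j' ((hv k') _)
        simp only [ha, hb, hBm, Fin.cases_succ, Matrix.of_apply]
        rw [this]; ring
  have h1 : (Matrix.of fun j k : Fin (N + 1) =>
      wirtingerD (fun w => wirtingerDBar
          (fun v => v 0 * (starRingEnd ℂ) (v 0) * u (v ∘ Fin.succ)) k w) j z)
      = Matrix.of fun j k => a j * ((Matrix.of fun j k => b k * Bm j k) j k) := by
    ext j k
    simpa using hM j k
  rw [h1, Matrix.det_mul_column a, Matrix.det_mul_row b]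
  have hpa : (∏ j, a j) = (z 0) ^ N := by
    rw [Fin.prod_univ_succ]
    simp [ha]
  have hpb : (∏ j, b j) = ((starRingEnd ℂ) (z 0)) ^ N := by
    rw [Fin.prod_univ_succ]
    simp [hb]
  rw [hpa, hpb, mul_pow]
  ring
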